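/- (Upper bound for Hamming weight) For all integers n ≥ k ≥ 1, the k-composition complexity of the Hamming weight function satisfies CC_k(HW_n) ≤ ⌈n/k⌉ · ⌈log₂(k+1)⌉; in particular CC_k(HW_n) ≤ O((n/k) · log k) for k ≥ 2. -/
import Mathlib

/-- The Hamming weight of `x ∈ {0,1}^n`: the number of coordinates equal to `1`. -/
def hw (n : ℕ) (x : Fin n → Bool) : ℕ := (Finset.univ.filter (fun i => x i = true)).card

/-- The majority function `Maj_n`: outputs `1` iff the Hamming weight is at least `n/2`. -/
def maj (n : ℕ) (x : Fin n → Bool) : Bool := decide (n ≤ 2 * hw n x)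

/-- `g : {0,1}^n → {0,1}` is `k`-local if it depends on at most `k` coordinates. -/
def IsKLocal {n : ℕ} (k : ℕ) (g : (Fin n → Bool) → Bool) : Prop :=
  ∃ I : Finset (Fin n), I.card ≤ k ∧
    ∀ x y : Fin n → Bool, (∀ i ∈ I, x i = y i) → g x = g y

/-- The `k`-composition complexity of `f : {0,1}^n → D`: the least `m` such that
`f = h(g_1, …, g_m)` with each `g_j` being `k`-local. -/
noncomputable def CCk {n : ℕ} {D : Type*} (k : ℕ) (f : (Fin n → Bool) → D) : ℕ :=
  sInf {m : ℕ | ∃ (g : Fin m → (Fin n → Bool) → Bool) (h : (Fin m → Bool) → D),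
    (∀ j, IsKLocal k (g j)) ∧ ∀ x, f x = h (fun j => g j x)}

lemma sum_testBit : ∀ (b w : ℕ), w < 2 ^ b →
    ∑ t ∈ Finset.range b, (w.testBit t).toNat * 2 ^ t = w := by
  intro b
  induction b with
  | zero => intro w h; interval_cases w; simp
  | succ b ih =>
    intro w h
    rw [Finset.sum_range_succ']
    have h2 : w / 2 < 2 ^ b := by
      rw [Nat.div_lt_iff_lt_mul (by norm_num)]
      calc w < 2 ^ (b + 1) := h
        _ = 2 ^ b * 2 := by ring
    have ihw := ih (w / 2) h2
    have e1 : ∀ t, (w.testBit (t + 1)).toNat * 2 ^ (t + 1)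
        = ((w / 2).testBit t).toNat * 2 ^ t * 2 := by
      intro t
      rw [Nat.testBit_succ]; ring
    rw [Finset.sum_congr rfl (fun t _ => e1 t), ← Finset.sum_mul, ihw]
    have e0 : (w.testBit 0).toNat = w % 2 := by
      rw [Nat.testBit_zero]
      rcases Nat.mod_two_eq_zero_or_one w with h' | h' <;> simp [h']
    rw [e0]
    omega

lemma block_card_le {n k : ℕ} (hk : 0 < k) (j : ℕ) :
    (Finset.univ.filter (fun i : Fin n => (i : ℕ) / k = j)).card ≤ k := by
  have := Finset.card_le_card_of_injOn (fun i : Fin n => (i : ℕ) % k)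
    (s := Finset.univ.filter (fun i : Fin n => (i : ℕ) / k = j)) (t := Finset.range k)
    (fun a _ => Finset.mem_range.2 (Nat.mod_lt _ hk)) ?_
  · simpa using this
  · intro a ha b hb hab
    simp only [Finset.coe_filter, Set.mem_setOf_eq] at ha hb
    have ha' := Nat.div_add_mod (a : ℕ) k
    have hb' := Nat.div_add_mod (b : ℕ) k
    simp only at hab
    have : (a : ℕ) = (b : ℕ) := by
      rw [← ha', ← hb', ha.2, hb.2, hab]
    exact Fin.ext this

theorem hw_upper_bound :
    ∃ C : ℝ, 0 < C ∧
      ∀ n k : ℕ, 1 ≤ k → k ≤ n →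
        CCk k (hw n) ≤ ⌈(n : ℝ) / (k : ℝ)⌉₊ * ⌈Real.logb 2 ((k : ℝ) + 1)⌉₊ ∧
        (2 ≤ k → (CCk k (hw n) : ℝ) ≤ C * ((n : ℝ) / (k : ℝ)) * Real.logb 2 (k : ℝ)) := by
  refine ⟨6, by norm_num, ?_⟩
  intro n k hk hkn
  have hk0 : 0 < k := hk
  have hkR : (0 : ℝ) < k := by exact_mod_cast hk0
  set q := ⌈(n : ℝ) / (k : ℝ)⌉₊ with hqdef
  set b := ⌈Real.logb 2 ((k : ℝ) + 1)⌉₊ with hbdef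
  -- n ≤ q * k
  have hnqk : n ≤ q * k := by
    have h1 : (n : ℝ) / (k : ℝ) ≤ q := Nat.le_ceil _
    rw [div_le_iff₀ hkR] at h1
    exact_mod_cast h1
  -- k < 2 ^ b
  have hk2b : k < 2 ^ b := by
    have h1 : Real.logb 2 ((k : ℝ) + 1) ≤ (b : ℝ) := Nat.le_ceil _
    have h2 : ((k : ℝ) + 1) ≤ (2 : ℝ) ^ (b : ℕ) := by
      calc ((k : ℝ) + 1) = (2 : ℝ) ^ Real.logb 2 ((k : ℝ) + 1) :=
            (Real.rpow_logb (by norm_num) (by norm_num) (by positivity)).symm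
        _ ≤ (2 : ℝ) ^ (b : ℝ) := Real.rpow_le_rpow_of_exponent_le (by norm_num) h1
        _ = (2 : ℝ) ^ (b : ℕ) := by rw [Real.rpow_natCast]
    have h3 : ((k + 1 : ℕ) : ℝ) ≤ ((2 ^ b : ℕ) : ℝ) := by push_cast; linarith
    have h4 : k + 1 ≤ 2 ^ b := by exact_mod_cast h3
    omega
  -- block weights
  set W : ℕ → (Fin n → Bool) → ℕ := fun j x =>
    (Finset.univ.filter (fun i : Fin n => (i : ℕ) / k = j ∧ x i = true)).card with hW
  have hWle : ∀ j x, W j x ≤ k := by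
    intro j x
    refine le_trans (Finset.card_le_card ?_) (block_card_le hk0 j)
    intro i hi
    simp only [Finset.mem_filter] at hi ⊢
    exact ⟨hi.1, hi.2.1⟩
  have hWlt : ∀ j x, W j x < 2 ^ b := fun j x => lt_of_le_of_lt (hWle j x) hk2b
  -- hw decomposes as sum of block weights
  have hhw : ∀ x, hw n x = ∑ j : Fin q, W (j : ℕ) x := by
    intro x
    rw [Fin.sum_univ_eq_sum_range (fun j => W j x) q]
    rw [hw, Finset.card_eq_sum_card_fiberwise (f := fun i : Fin n => (i : ℕ) / k)
      (t := Finset.range q) ?_]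
    · refine Finset.sum_congr rfl (fun j _ => ?_)
      rw [Finset.filter_filter]
      congr 1
      ext i
      simp [and_comm]
    · intro i _
      refine Finset.mem_range.2 ?_
      rw [Nat.div_lt_iff_lt_mul hk0]
      calc (i : ℕ) < n := i.isLt
        _ ≤ q * k := hnqk
  -- the composition
  have hmem : q * b ∈ {m : ℕ | ∃ (g : Fin m → (Fin n → Bool) → Bool)
      (h : (Fin m → Bool) → ℕ),
      (∀ j, IsKLocal k (g j)) ∧ ∀ x, hw n x = h (fun j => g j x)} := by
    refine ⟨fun j x => (W ((finProdFinEquiv.symm j).1 : ℕ) x).testBit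
        ((finProdFinEquiv.symm j).2 : ℕ),
      fun v => ∑ p : Fin q × Fin b, (v (finProdFinEquiv p)).toNat * 2 ^ ((p.2 : ℕ)),
      ?_, ?_⟩
    · intro j
      refine ⟨Finset.univ.filter
          (fun i : Fin n => (i : ℕ) / k = ((finProdFinEquiv.symm j).1 : ℕ)),
        block_card_le hk0 _, ?_⟩
      intro x y hxy
      have : W ((finProdFinEquiv.symm j).1 : ℕ) x
          = W ((finProdFinEquiv.symm j).1 : ℕ) y := by
        simp only [hW]
        congr 1
        apply Finset.filter_congr
        intro i _
        constructor
        · rintro ⟨hd, hx⟩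
          exact ⟨hd, by rw [← hxy i (by simp [hd])]; exact hx⟩
        · rintro ⟨hd, hy⟩
          exact ⟨hd, by rw [hxy i (by simp [hd])]; exact hy⟩
      simp only [this]
    · intro x
      simp only [Equiv.symm_apply_apply]
      rw [Fintype.sum_prod_type, hhw x]
      refine Finset.sum_congr rfl (fun j _ => ?_)
      rw [Fin.sum_univ_eq_sum_range (fun t => ((W (j : ℕ) x).testBit t).toNat * 2 ^ t) b]
      exact (sum_testBit b _ (hWlt _ x)).symm
  have hCC : CCk k (hw n) ≤ q * b := Nat.sInf_le hmem
  refine ⟨hCC, ?_⟩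
  intro hk2
  have hk2R : (2 : ℝ) ≤ (k : ℝ) := by exact_mod_cast hk2
  have hnk1 : (1 : ℝ) ≤ (n : ℝ) / (k : ℝ) := by
    rw [le_div_iff₀ hkR]
    simpa using (by exact_mod_cast hkn : (k : ℝ) ≤ (n : ℝ))
  have hlogk1 : (1 : ℝ) ≤ Real.logb 2 (k : ℝ) := by
    have : Real.logb 2 2 ≤ Real.logb 2 (k : ℝ) :=
      (Real.logb_le_logb (by norm_num) (by norm_num) (by linarith)).2 hk2R
    simpa [Real.logb_self_eq_one] using this
  have hqR : (q : ℝ) ≤ 2 * ((n : ℝ) / (k : ℝ)) := by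
    have := Nat.ceil_lt_add_one (a := (n : ℝ) / (k : ℝ)) (by positivity)
    rw [← hqdef] at this
    linarith
  have hbR : (b : ℝ) ≤ 3 * Real.logb 2 (k : ℝ) := by
    have h1 : (b : ℝ) < Real.logb 2 ((k : ℝ) + 1) + 1 := by
      have := Nat.ceil_lt_add_one (a := Real.logb 2 ((k : ℝ) + 1))
        (by
          have : (1 : ℝ) ≤ (k : ℝ) + 1 := by linarith
          exact Real.logb_nonneg (by norm_num) this)
      rw [← hbdef] at this
      linarith
    have h2 : Real.logb 2 ((k : ℝ) + 1) ≤ 2 * Real.logb 2 (k : ℝ) := by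
      have hle : (k : ℝ) + 1 ≤ (k : ℝ) ^ 2 := by nlinarith
      have := (Real.logb_le_logb (b := 2) (by norm_num) (by linarith)
        (by positivity)).2 hle
      calc Real.logb 2 ((k : ℝ) + 1) ≤ Real.logb 2 ((k : ℝ) ^ 2) := this
        _ = 2 * Real.logb 2 (k : ℝ) := by
            rw [Real.logb_pow]; push_cast; ring
    linarith
  have hCCR : (CCk k (hw n) : ℝ) ≤ (q : ℝ) * (b : ℝ) := by
    have : ((CCk k (hw n) : ℕ) : ℝ) ≤ ((q * b : ℕ) : ℝ) := by exact_mod_cast hCC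
    simpa using this
  calc (CCk k (hw n) : ℝ) ≤ (q : ℝ) * (b : ℝ) := hCCR
    _ ≤ (2 * ((n : ℝ) / (k : ℝ))) * (3 * Real.logb 2 (k : ℝ)) := by
        apply mul_le_mul hqR hbR (by positivity) (by positivity)
    _ = 6 * ((n : ℝ) / (k : ℝ)) * Real.logb 2 (k : ℝ) := by ring
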